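/- Let (d_i)_{i≥1} and (ρ_i)_{i≥1} be sequences of positive reals with 0 < ρ_i ≤ d_i for all i ≥ 1 and inf_{i≥1} d_i > 0, let d_0 > 0, and define F(x) := (1/(x+d_0))·∑_{i=1}^∞ i·ρ_i·∏_{j=1}^i x/(x+d_j) for x ≥ 0. If d_i/(i·ρ_i) → 0 as i → ∞, then F(x) → ∞ as x → ∞, and consequently for every c > 0 there exists x > 0 with F(x) = c. -/

import Mathlib

open Filter

private lemma aux_summable_geom {r : ℝ} (hr : |r| < 1) :
    Summable (fun i : ℕ => ((i : ℝ) + 1) * r ^ i) := by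
  have h1 : Summable (fun i : ℕ => ((i : ℝ)) ^ 1 * r ^ i) :=
    summable_pow_mul_geometric_of_norm_lt_one 1 (by simpa using hr)
  have h2 : Summable (fun i : ℕ => r ^ i) :=
    summable_geometric_of_norm_lt_one (by simpa using hr)
  have := h1.add h2
  refine this.congr fun i => by ring

private lemma aux_tendsto_frac (c : ℝ) (hc : 0 < c) :
    Tendsto (fun x : ℝ => x / (x + c)) atTop (nhds 1) := by
  have h0 : Tendsto (fun x : ℝ => c / (x + c)) atTop (nhds 0) :=
    tendsto_const_nhds.div_atTop (tendsto_atTop_add_const_right _ c tendsto_id)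
  have h1 : Tendsto (fun x : ℝ => 1 - c / (x + c)) atTop (nhds 1) := by
    simpa using tendsto_const_nhds.sub h0
  refine h1.congr' ?_
  filter_upwards [eventually_gt_atTop 0] with x hx
  have hxc : x + c ≠ 0 := by positivity
  field_simp
  ring

/-- If `d_i = o(i·ρ_i)` as `i → ∞`, then the silicosis equilibrium function
`F(x) = (1/(x+d₀))·∑_{i=1}^∞ i·ρ_i·∏_{j=1}^i x/(x+d_j)` tends to `∞` as `x → ∞`, and
consequently every value `c > 0` is attained at some `x > 0`. -/
theorem silicosis_equilibrium_exists_all (d ρ : ℕ → ℝ)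
    (hρ : ∀ i : ℕ, 1 ≤ i → 0 < ρ i) (hρd : ∀ i : ℕ, 1 ≤ i → ρ i ≤ d i)
    (hz : 0 < ⨅ i : ℕ, d (i + 1)) (d₀ : ℝ) (hd₀ : 0 < d₀)
    (F : ℝ → ℝ)
    (hF : ∀ x : ℝ, F x = (1 / (x + d₀)) *
      ∑' i : ℕ, ((i + 1 : ℕ) : ℝ) * ρ (i + 1) * ∏ j ∈ Finset.Icc 1 (i + 1), x / (x + d j))
    (h : Tendsto (fun i : ℕ => d i / ((i : ℝ) * ρ i)) atTop (nhds 0)) :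
    Tendsto F atTop atTop ∧ ∀ c : ℝ, 0 < c → ∃ x : ℝ, 0 < x ∧ F x = c := by
  classical
  set δ : ℝ := ⨅ i : ℕ, d (i + 1) with hδdef
  have hbdd : BddBelow (Set.range fun i : ℕ => d (i + 1)) := by
    by_contra hb
    rw [hδdef, Real.iInf_of_not_bddBelow hb] at hz
    exact lt_irrefl 0 hz
  have hdδ : ∀ j : ℕ, 1 ≤ j → δ ≤ d j := by
    intro j hj
    obtain ⟨k, rfl⟩ : ∃ k, j = k + 1 := ⟨j - 1, by omega⟩
    exact ciInf_le hbdd k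
  have hdpos : ∀ j : ℕ, 1 ≤ j → 0 < d j := fun j hj => lt_of_lt_of_le hz (hdδ j hj)
  -- abbreviations
  set P : ℝ → ℕ → ℝ := fun x i => ∏ j ∈ Finset.Icc 1 i, x / (x + d j) with hPdef
  set a : ℝ → ℕ → ℝ := fun x i => ((i + 1 : ℕ) : ℝ) * ρ (i + 1) * P x (i + 1) with hadef
  have hFa : ∀ x : ℝ, F x = (1 / (x + d₀)) * ∑' i : ℕ, a x i := hF
  have hpos : ∀ x : ℝ, 0 ≤ x → ∀ j : ℕ, 1 ≤ j → 0 < x + d j :=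
    fun x hx j hj => add_pos_of_nonneg_of_pos hx (hdpos j hj)
  have hfrac_nonneg : ∀ x : ℝ, 0 ≤ x → ∀ j : ℕ, 1 ≤ j → 0 ≤ x / (x + d j) :=
    fun x hx j hj => div_nonneg hx (hpos x hx j hj).le
  have hfrac_le : ∀ x : ℝ, 0 ≤ x → ∀ j : ℕ, 1 ≤ j → x / (x + d j) ≤ x / (x + δ) := by
    intro x hx j hj
    rcases eq_or_lt_of_le hx with hx0 | hx0
    · simp [← hx0]
    · rw [div_le_div_iff₀ (hpos x hx j hj) (by positivity)]
      nlinarith [hdδ j hj]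
  have hP_nonneg : ∀ x : ℝ, 0 ≤ x → ∀ i : ℕ, 0 ≤ P x i := by
    intro x hx i
    refine Finset.prod_nonneg fun j hj => hfrac_nonneg x hx j (Finset.mem_Icc.1 hj).1
  have hP_le : ∀ x : ℝ, 0 ≤ x → ∀ i : ℕ, P x i ≤ (x / (x + δ)) ^ i := by
    intro x hx i
    calc P x i ≤ ∏ _j ∈ Finset.Icc 1 i, x / (x + δ) :=
          Finset.prod_le_prod
            (fun j hj => hfrac_nonneg x hx j (Finset.mem_Icc.1 hj).1)
            (fun j hj => hfrac_le x hx j (Finset.mem_Icc.1 hj).1)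
      _ = (x / (x + δ)) ^ i := by
          rw [Finset.prod_const, Nat.card_Icc, Nat.add_sub_cancel]
  have hP_succ : ∀ x : ℝ, ∀ i : ℕ, P x (i + 1) = P x i * (x / (x + d (i + 1))) := by
    intro x i
    exact Finset.prod_Icc_succ_top (by omega) _
  have hr_lt : ∀ x : ℝ, 0 ≤ x → x / (x + δ) < 1 := by
    intro x hx
    rw [div_lt_one (by positivity)]
    linarith
  have hr_nonneg : ∀ x : ℝ, 0 ≤ x → 0 ≤ x / (x + δ) := by
    intro x hx; positivity
  have ha_nonneg : ∀ x : ℝ, 0 ≤ x → ∀ i : ℕ, 0 ≤ a x i := by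
    intro x hx i
    have := hρ (i + 1) (by omega)
    have := hP_nonneg x hx (i + 1)
    positivity
  have ha_le : ∀ x : ℝ, 0 ≤ x → ∀ i : ℕ,
      a x i ≤ x * (((i : ℝ) + 1) * (x / (x + δ)) ^ i) := by
    intro x hx i
    have hd1 : 0 < d (i + 1) := hdpos (i + 1) (by omega)
    have hxd : 0 < x + d (i + 1) := hpos x hx (i + 1) (by omega)
    have hPn : 0 ≤ P x i := hP_nonneg x hx i
    have key : d (i + 1) * (x / (x + d (i + 1))) ≤ x := by
      rw [mul_div_assoc'] at *
      rw [div_le_iff₀ hxd]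
      nlinarith
    calc a x i = ((i : ℝ) + 1) * ρ (i + 1) * (P x i * (x / (x + d (i + 1)))) := by
          rw [hadef]; push_cast; rw [hP_succ]
      _ ≤ ((i : ℝ) + 1) * d (i + 1) * (P x i * (x / (x + d (i + 1)))) := by
          have hfr : 0 ≤ x / (x + d (i + 1)) := div_nonneg hx hxd.le
          have : ρ (i + 1) ≤ d (i + 1) := hρd (i + 1) (by omega)
          have hi1 : (0:ℝ) ≤ (i : ℝ) + 1 := by positivity
          exact mul_le_mul_of_nonneg_right
            (mul_le_mul_of_nonneg_left this hi1) (mul_nonneg hPn hfr)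
      _ = ((i : ℝ) + 1) * P x i * (d (i + 1) * (x / (x + d (i + 1)))) := by ring
      _ ≤ ((i : ℝ) + 1) * P x i * x := by
          have hi1 : (0:ℝ) ≤ ((i : ℝ) + 1) * P x i := by positivity
          exact mul_le_mul_of_nonneg_left key hi1
      _ ≤ ((i : ℝ) + 1) * (x / (x + δ)) ^ i * x := by
          have := hP_le x hx i
          have hi1 : (0:ℝ) ≤ (i : ℝ) + 1 := by positivity
          exact mul_le_mul_of_nonneg_right
            (mul_le_mul_of_nonneg_left this hi1) hx
      _ = x * (((i : ℝ) + 1) * (x / (x + δ)) ^ i) := by ring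
  have hsum : ∀ x : ℝ, 0 ≤ x → Summable (a x) := by
    intro x hx
    have hr : |x / (x + δ)| < 1 :=
      abs_lt.2 ⟨lt_of_lt_of_le (by norm_num) (hr_nonneg x hx), hr_lt x hx⟩
    refine Summable.of_nonneg_of_le (ha_nonneg x hx) (ha_le x hx) ?_
    exact (aux_summable_geom hr).mul_left x
  -- telescoping identity
  have htel : ∀ x : ℝ, 0 ≤ x → ∀ i : ℕ,
      d (i + 1) * P x (i + 1) = x * (P x i - P x (i + 1)) := by
    intro x hx i
    have hxd : 0 < x + d (i + 1) := hpos x hx (i + 1) (by omega)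
    rw [hP_succ]
    field_simp
    ring
  -- Part A : Tendsto F atTop atTop
  have hA : Tendsto F atTop atTop := by
    rw [tendsto_atTop]
    intro K
    set K' : ℝ := max K 1 with hK'def
    have hK' : 0 < K' := lt_of_lt_of_le one_pos (le_max_right _ _)
    set ε : ℝ := 1 / (8 * K') with hεdef
    have hε : 0 < ε := by positivity
    obtain ⟨N0, hN0⟩ := eventually_atTop.1 (h.eventually (gt_mem_nhds hε))
    set N : ℕ := max N0 1 with hNdef
    have hN1 : 1 ≤ N := le_max_right _ _
    have hdle : ∀ i : ℕ, N ≤ i → d i ≤ ε * ((i : ℝ) * ρ i) := by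
      intro i hi
      have hi1 : 1 ≤ i := le_trans hN1 hi
      have hiρ : 0 < (i : ℝ) * ρ i := by
        have := hρ i hi1
        have : (0:ℝ) < i := by exact_mod_cast hi1
        positivity
      have := hN0 i (le_trans (le_max_left _ _) hi)
      exact le_of_lt ((div_lt_iff₀ hiρ).1 this)
    -- eventually P x N ≥ 1/2
    have hPNt : Tendsto (fun x : ℝ => P x N) atTop (nhds 1) := by
      have h2 := tendsto_finset_prod (Finset.Icc 1 N)
        (f := fun j (x : ℝ) => x / (x + d j)) (x := atTop) (a := fun _ => 1)
        (fun j hj => aux_tendsto_frac (d j) (hdpos j (Finset.mem_Icc.1 hj).1))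
      rw [Finset.prod_const_one] at h2
      exact h2
    have hPNev : ∀ᶠ x : ℝ in atTop, 1 / 2 < P x N :=
      hPNt.eventually (lt_mem_nhds (by norm_num))
    filter_upwards [eventually_ge_atTop d₀, eventually_gt_atTop 0, hPNev]
      with x hxd₀ hx0 hPx
    have hx0' : (0:ℝ) ≤ x := hx0.le
    set r : ℝ := x / (x + δ) with hrdef
    have hr0 : 0 ≤ r := hr_nonneg x hx0'
    have hr1 : r < 1 := hr_lt x hx0'
    obtain ⟨M0, hM0⟩ := exists_pow_lt_of_lt_one (show (0:ℝ) < 1/4 by norm_num) hr1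
    set M : ℕ := max M0 N with hMdef
    have hNM : N ≤ M := le_max_right _ _
    have hPM : P x M < 1 / 4 := by
      calc P x M ≤ r ^ M := hP_le x hx0' M
        _ ≤ r ^ M0 := pow_le_pow_of_le_one hr0 hr1.le (le_max_left _ _)
        _ < 1 / 4 := hM0
    -- telescoping finite sum
    have htelsum : ∑ i ∈ Finset.Ico N M, (P x i - P x (i + 1)) = P x N - P x M := by
      rw [Finset.sum_Ico_eq_sum_range]
      have := Finset.sum_range_sub' (fun i => P x (N + i)) (M - N)
      simpa [Nat.add_sub_cancel' hNM, Nat.add_assoc] using this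
    have hterm_lb : ∀ i ∈ Finset.Ico N M, (x / ε) * (P x i - P x (i + 1)) ≤ a x i := by
      intro i hi
      have hiN : N ≤ i := (Finset.mem_Ico.1 hi).1
      have hiN1 : N ≤ i + 1 := le_trans hiN (by omega)
      have hdlei := hdle (i + 1) hiN1
      have hP1 : 0 ≤ P x (i + 1) := hP_nonneg x hx0' (i + 1)
      have : (x / ε) * (P x i - P x (i + 1)) = (1 / ε) * (d (i + 1) * P x (i + 1)) := by
        rw [htel x hx0' i]; ring
      rw [this]
      have : (1 / ε) * (d (i + 1) * P x (i + 1)) ≤ (1 / ε) * (ε * (((i:ℝ)+1) * ρ (i+1)) * P x (i + 1)) := by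
        have h1 : d (i + 1) ≤ ε * (((i:ℝ)+1) * ρ (i+1)) := by
          have := hdlei; push_cast at this ⊢; linarith
        have h2 : (0:ℝ) ≤ 1 / ε := by positivity
        nlinarith [mul_le_mul_of_nonneg_right h1 hP1]
      refine le_trans this ?_
      rw [hadef]
      push_cast
      have heq2 : (1/ε) * (ε * (((i:ℝ)+1) * ρ (i+1)) * P x (i+1))
          = (ε⁻¹ * ε) * ((((i:ℝ)+1) * ρ (i+1)) * P x (i+1)) := by
        rw [one_div]; ring
      rw [heq2, inv_mul_cancel₀ (ne_of_gt hε), one_mul, mul_assoc]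
    have hsum_lb : (x / ε) * (P x N - P x M) ≤ ∑' i, a x i := by
      calc (x / ε) * (P x N - P x M)
          = ∑ i ∈ Finset.Ico N M, (x / ε) * (P x i - P x (i + 1)) := by
            rw [← Finset.mul_sum, htelsum]
        _ ≤ ∑ i ∈ Finset.Ico N M, a x i := Finset.sum_le_sum hterm_lb
        _ ≤ ∑' i, a x i := Summable.sum_le_tsum _ (fun i _ => ha_nonneg x hx0' i) (hsum x hx0')
    have hxd₀pos : 0 < x + d₀ := by linarith
    have hFx : (1 / (x + d₀)) * ((x / ε) * (P x N - P x M)) ≤ F x := by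
      rw [hFa]
      have : (0:ℝ) ≤ 1 / (x + d₀) := by positivity
      exact mul_le_mul_of_nonneg_left hsum_lb this
    have hquarter : (1:ℝ)/4 ≤ P x N - P x M := by linarith
    have hxfrac : 1 / 2 ≤ x / (x + d₀) := by
      rw [div_le_div_iff₀ (by norm_num) hxd₀pos]
      linarith
    have hKK : K ≤ K' := le_max_left _ _
    refine le_trans hKK (le_trans ?_ hFx)
    have hεK : 1 / ε = 8 * K' := by
      rw [hεdef, one_div_one_div]
    have heq : (1 / (x + d₀)) * ((x / ε) * (P x N - P x M))
        = (x / (x + d₀)) * (1 / ε) * (P x N - P x M) := by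
      have hxd₀ne : x + d₀ ≠ 0 := ne_of_gt hxd₀pos
      have hεne : ε ≠ 0 := ne_of_gt hε
      field_simp
    rw [heq, hεK]
    have huv : (1:ℝ)/8 ≤ (x / (x + d₀)) * (P x N - P x M) := by
      nlinarith [hxfrac, hquarter]
    calc K' = (8 * K') * (1/8) := by ring
      _ ≤ (8 * K') * ((x / (x + d₀)) * (P x N - P x M)) := by
          have h8 : (0:ℝ) ≤ 8 * K' := by positivity
          exact mul_le_mul_of_nonneg_left huv h8
      _ = x / (x + d₀) * (8 * K') * (P x N - P x M) := by ring
  constructor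
  · exact hA
  -- Part B : intermediate value
  intro c hc
  obtain ⟨b, hcb, hb0⟩ := (((tendsto_atTop.1 hA) c).and (eventually_gt_atTop 0)).exists
  -- F 0 = 0
  have hF0 : F 0 = 0 := by
    rw [hFa]
    have : ∀ i : ℕ, a 0 i = 0 := by
      intro i
      rw [hadef]
      have : P 0 (i + 1) = 0 := by
        rw [hPdef]
        exact Finset.prod_eq_zero (Finset.mem_Icc.2 ⟨le_refl 1, by omega⟩) (by simp)
      simp [this]
    have h0 : ∑' i : ℕ, a 0 i = 0 := by
      have := tsum_congr (L := SummationFilter.unconditional ℕ) (f := fun i : ℕ => a 0 i) (g := fun _ : ℕ => (0:ℝ)) this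
      rw [this, tsum_zero]
    rw [h0, mul_zero]
  -- continuity of F on [0, b]
  have hScont : ContinuousOn (fun x => ∑' i, a x i) (Set.Icc 0 b) := by
    set rb : ℝ := b / (b + δ) with hrbdef
    have hrb0 : 0 ≤ rb := hr_nonneg b hb0.le
    have hrb1 : rb < 1 := hr_lt b hb0.le
    refine continuousOn_tsum (f := fun (i : ℕ) (x : ℝ) => a x i)
      (u := fun i : ℕ => b * (((i:ℝ) + 1) * rb ^ i)) ?_ ?_ ?_
    · intro i
      rw [hadef, hPdef]
      refine ContinuousOn.mul continuousOn_const ?_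
      refine continuousOn_finset_prod _ fun j hj => ?_
      refine ContinuousOn.div continuousOn_id
        (continuousOn_id.add continuousOn_const) fun x hx => ?_
      exact ne_of_gt (hpos x hx.1 j (Finset.mem_Icc.1 hj).1)
    · exact (aux_summable_geom (abs_lt.2 ⟨lt_of_lt_of_le (by norm_num) hrb0, hrb1⟩)).mul_left b
    · intro i x hx
      obtain ⟨hx0, hxb⟩ := hx
      rw [Real.norm_eq_abs, abs_of_nonneg (ha_nonneg x hx0 i)]
      refine le_trans (ha_le x hx0 i) ?_
      have hxδ : 0 < x + δ := add_pos_of_nonneg_of_pos hx0 hz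
      have hbδ : 0 < b + δ := add_pos hb0 hz
      have hfr : x / (x + δ) ≤ rb := by
        rw [hrbdef, div_le_div_iff₀ hxδ hbδ]
        nlinarith
      have hp : (x / (x + δ)) ^ i ≤ rb ^ i :=
        pow_le_pow_left₀ (hr_nonneg x hx0) hfr i
      have hi1 : (0:ℝ) ≤ (i:ℝ) + 1 := by positivity
      have h1 : ((i:ℝ) + 1) * (x / (x + δ)) ^ i ≤ ((i:ℝ) + 1) * rb ^ i :=
        mul_le_mul_of_nonneg_left hp hi1
      exact mul_le_mul hxb h1
        (mul_nonneg hi1 (pow_nonneg (hr_nonneg x hx0) i)) hb0.le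
  have hFcont : ContinuousOn F (Set.Icc 0 b) := by
    have hFeq : ∀ x ∈ Set.Icc (0:ℝ) b, F x = (1 / (x + d₀)) * ∑' i, a x i :=
      fun x _ => hFa x
    refine ContinuousOn.congr ?_ hFeq
    refine ContinuousOn.mul ?_ hScont
    refine ContinuousOn.div continuousOn_const
      (continuousOn_id.add continuousOn_const) fun x hx => ?_
    have : 0 < x + d₀ := add_pos_of_nonneg_of_pos hx.1 hd₀
    exact ne_of_gt this
  have hmem : c ∈ Set.Icc (F 0) (F b) := by
    rw [hF0]; exact ⟨hc.le, hcb⟩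
  obtain ⟨x, hx, hFx⟩ := intermediate_value_Icc hb0.le hFcont hmem
  refine ⟨x, ?_, hFx⟩
  rcases eq_or_lt_of_le hx.1 with h0 | h0
  · exfalso
    rw [← h0] at hFx
    rw [hF0] at hFx
    exact absurd hFx.symm (ne_of_gt hc)
  · exact h0
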